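/- Let Y_1, ..., Y_m be independent with Y_i = θ_i + Z_i, all Z_i having common continuous CDF F. For δ ∈ (0,1) and α ∈ (0,1), set c̲ = F^{-1}(1 - δα/m) and c̄ = -F^{-1}((1-δ)α/k). Then the intervals [Y_i - c̲, Y_i + c̄] for i in the set of indices of the k largest Y's simultaneously cover the corresponding θ_i with probability at least 1 - α. -/

import Mathlib

open MeasureTheory ProbabilityTheory Finset
open scoped ENNReal

section auxlem

variable {Ω : Type*} [MeasurableSpace Ω]

/-- rank function injectivity / counting lemma -/
lemma rank_card_le {ι : Type*} [Fintype ι] [DecidableEq ι] (f : ι → ℝ)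
    (hf : Function.Injective f) (k : ℕ) :
    (Finset.univ.filter fun i => (Finset.univ.filter fun j => f i < f j).card < k).card ≤ k := by
  set r : ι → ℕ := fun i => (Finset.univ.filter fun j => f i < f j).card with hr
  have hkey : ∀ a b : ι, f a < f b → r b < r a := by
    intro a b hab
    apply Finset.card_lt_card
    constructor
    · intro j hj
      simp only [Finset.mem_filter, Finset.mem_univ, true_and] at hj ⊢
      exact hab.trans hj
    · intro hsub
      have hb : b ∈ Finset.univ.filter fun j => f a < f j := by
        simp [hab]
      have := hsub hb
      simp at this
  have hrinj : Function.Injective r := by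
    intro a b hab
    rcases lt_trichotomy (f a) (f b) with h | h | h
    · exact absurd hab (by have := hkey a b h; omega)
    · exact hf h
    · exact absurd hab (by have := hkey b a h; omega)
  calc (Finset.univ.filter fun i => r i < k).card
      ≤ (Finset.range k).card := by
        apply Finset.card_le_card_of_injOn r
        · intro i hi
          simp only [Finset.mem_coe, Finset.mem_filter] at hi
          simpa using hi.2
        · exact Function.Injective.injOn hrinj
    _ = k := Finset.card_range k

lemma card_filter_subtype {n : ℕ} (i : Fin n) (Q : Fin n → Prop) [DecidablePred Q]
    (hi : ¬ Q i) :
    (Finset.univ.filter fun j : {j : Fin n // j ≠ i} => Q j.1).card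
      = (Finset.univ.filter Q).card := by
  apply Finset.card_bij (fun j _ => j.1)
  · intro a ha
    simp only [Finset.mem_filter, Finset.mem_univ, true_and] at ha ⊢
    exact ha
  · intro a _ b _ hab
    exact Subtype.ext hab
  · intro b hb
    simp only [Finset.mem_filter, Finset.mem_univ, true_and] at hb
    exact ⟨⟨b, fun h => hi (h ▸ hb)⟩, by simp [hb], rfl⟩

/-- From the CDF identity on `Iic` and continuity, `Iio` has the same measure. -/
lemma Iio_eq_ofReal (μ : Measure ℝ) [IsProbabilityMeasure μ] (F : ℝ → ℝ) (hFc : Continuous F)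
    (hIic : ∀ x, μ (Set.Iic x) = ENNReal.ofReal (F x)) (x : ℝ) :
    μ (Set.Iio x) = ENNReal.ofReal (F x) := by
  refine le_antisymm ?_ ?_
  · rw [← hIic x]; exact measure_mono Set.Iio_subset_Iic_self
  · have htend : Filter.Tendsto (fun n : ℕ => ENNReal.ofReal (F (x - 1 / (n + 1))))
        Filter.atTop (nhds (ENNReal.ofReal (F x))) := by
      apply (ENNReal.continuous_ofReal.tendsto _).comp
      apply (hFc.tendsto _).comp
      have : Filter.Tendsto (fun n : ℕ => x - 1 / ((n : ℝ) + 1)) Filter.atTop (nhds (x - 0)) :=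
        tendsto_const_nhds.sub tendsto_one_div_add_atTop_nhds_zero_nat
      simpa using this
    refine le_of_tendsto htend (Filter.Eventually.of_forall fun n => ?_)
    rw [← hIic]
    apply measure_mono
    intro y hy
    simp only [Set.mem_Iic] at hy
    simp only [Set.mem_Iio]
    have : (0:ℝ) < 1 / ((n : ℝ) + 1) := by positivity
    linarith

lemma atom_zero (μ : Measure ℝ) [IsProbabilityMeasure μ] (F : ℝ → ℝ) (hFc : Continuous F)
    (hIic : ∀ x, μ (Set.Iic x) = ENNReal.ofReal (F x)) (x : ℝ) : μ {x} = 0 := by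
  have h1 : μ (Set.Iic x) = μ (Set.Iio x) + μ {x} := by
    rw [← Set.Iio_union_right, measure_union (by simp) (measurableSet_singleton x)]
  rw [hIic, Iio_eq_ofReal μ F hFc hIic] at h1
  have hne : ENNReal.ofReal (F x) ≠ ⊤ := ENNReal.ofReal_ne_top
  nth_rewrite 1 [← add_zero (ENNReal.ofReal (F x))] at h1
  exact ((ENNReal.add_right_inj hne).mp h1).symm

/-- The key slice bound: for an upward closed set `U` and prob. measure with cdf `F`. -/
lemma slice_bound (μ : Measure ℝ) [IsProbabilityMeasure μ] (F : ℝ → ℝ)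
    (hFc : Continuous F) (hmono : Monotone F)
    (hIic : ∀ x, μ (Set.Iic x) = ENNReal.ofReal (F x))
    (hF0 : ∀ x, 0 ≤ F x) (hF1 : ∀ x, F x ≤ 1)
    (U : Set ℝ) (hU : ∀ ⦃x y⦄, x ∈ U → x ≤ y → y ∈ U) (c : ℝ) :
    μ (U ∩ Set.Iio c) ≤ ENNReal.ofReal (F c) * μ U := by
  have hIio := Iio_eq_ofReal μ F hFc hIic
  rcases Set.eq_empty_or_nonempty U with h | ⟨u0, hu0⟩
  · simp [h]
  by_cases hbdd : BddBelow U
  · set s := sInf U with hs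
    have hUIci : U ⊆ Set.Ici s := fun x hx => csInf_le hbdd hx
    have hIoiU : Set.Ioi s ⊆ U := by
      intro x hx
      obtain ⟨u, hu, hux⟩ := (csInf_lt_iff hbdd ⟨u0, hu0⟩).mp hx
      exact hU hu hux.le
    by_cases hsc : c ≤ s
    · have : U ∩ Set.Iio c = ∅ := by
        ext x; simp only [Set.mem_inter_iff, Set.mem_Iio, Set.mem_empty_iff_false, iff_false,
          not_and]
        intro hx
        have := hUIci hx
        simp only [Set.mem_Ici] at this
        linarith
      simp [this]
    · push_neg at hsc
      have h1 : μ (U ∩ Set.Iio c) ≤ ENNReal.ofReal (F c - F s) := by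
        have hsubset : U ∩ Set.Iio c ⊆ Set.Ico s c := by
          intro x ⟨hx1, hx2⟩
          exact ⟨hUIci hx1, hx2⟩
        refine (measure_mono hsubset).trans ?_
        have hd : Set.Iio s ∪ Set.Ico s c = Set.Iio c := Set.Iio_union_Ico_eq_Iio hsc.le
        have : μ (Set.Iio s) + μ (Set.Ico s c) = μ (Set.Iio c) := by
          rw [← hd, measure_union ?_ measurableSet_Ico]
          · rw [Set.disjoint_left]; intro x hx1 hx2
            simp only [Set.mem_Iio] at hx1
            exact absurd hx2.1 (by linarith)
        rw [hIio, hIio] at this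
        have := ENNReal.sub_eq_of_eq_add_rev (by exact ENNReal.ofReal_ne_top) this.symm
        rw [← this, ← ENNReal.ofReal_sub _ (hF0 s)]
      have h2 : ENNReal.ofReal (1 - F s) ≤ μ U := by
        have : μ (Set.Ioi s) = ENNReal.ofReal (1 - F s) := by
          have : Set.Ioi s = (Set.Iic s)ᶜ := by simp
          rw [this, prob_compl_eq_one_sub measurableSet_Iic, hIic,
            ← ENNReal.ofReal_one, ← ENNReal.ofReal_sub _ (hF0 s)]
        rw [← this]; exact measure_mono hIoiU
      calc μ (U ∩ Set.Iio c) ≤ ENNReal.ofReal (F c - F s) := h1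
        _ ≤ ENNReal.ofReal (F c * (1 - F s)) := by
            apply ENNReal.ofReal_le_ofReal; nlinarith [hF0 s, hF1 c, hF0 c, hF1 s,
              hmono hsc.le]
        _ = ENNReal.ofReal (F c) * ENNReal.ofReal (1 - F s) := by
            rw [ENNReal.ofReal_mul (hF0 c)]
        _ ≤ ENNReal.ofReal (F c) * μ U := by gcongr
  · -- unbounded below: U = univ
    have hUuniv : U = Set.univ := by
      ext x; simp only [Set.mem_univ, iff_true]
      rw [not_bddBelow_iff] at hbdd
      obtain ⟨y, hy, hyx⟩ := hbdd x
      exact hU hy hyx.le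
    rw [hUuniv, Set.univ_inter, hIio, measure_univ, mul_one]

end auxlem

section keylem
variable {Ω : Type*} [MeasurableSpace Ω]

lemma key_bound (P : Measure Ω) [IsProbabilityMeasure P]
    {J : Type*} [Fintype J] (X : Ω → ℝ) (hX : Measurable X)
    (W : Ω → J → ℝ) (hW : Measurable W) (hind : IndepFun W X P)
    (F : ℝ → ℝ) (hFc : Continuous F) (hmono : Monotone F)
    (hIic : ∀ x, P.map X (Set.Iic x) = ENNReal.ofReal (F x))
    (hF0 : ∀ x, 0 ≤ F x) (hF1 : ∀ x, F x ≤ 1)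
    (A : (J → ℝ) → ℝ → Prop)
    (hAmeas : MeasurableSet {p : (J → ℝ) × ℝ | A p.1 p.2})
    (hAmono : ∀ w z z', z ≤ z' → A w z → A w z') (c : ℝ) :
    P {ω | A (W ω) (X ω) ∧ X ω < c} ≤ ENNReal.ofReal (F c) * P {ω | A (W ω) (X ω)} := by
  set μ := P.map X with hμ
  set ν := P.map W with hν
  haveI : IsProbabilityMeasure μ := Measure.isProbabilityMeasure_map hX.aemeasurable
  haveI : IsProbabilityMeasure ν := Measure.isProbabilityMeasure_map hW.aemeasurable
  have hmap : P.map (fun ω => (W ω, X ω)) = ν.prod μ :=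
    (indepFun_iff_map_prod_eq_prod_map_map hW.aemeasurable hX.aemeasurable).mp hind
  have hE1 : MeasurableSet {p : (J → ℝ) × ℝ | A p.1 p.2 ∧ p.2 < c} := by
    exact hAmeas.inter (measurable_snd measurableSet_Iio)
  have hpair : Measurable (fun ω => (W ω, X ω)) := hW.prodMk hX
  have e1 : P {ω | A (W ω) (X ω) ∧ X ω < c}
      = (ν.prod μ) {p : (J → ℝ) × ℝ | A p.1 p.2 ∧ p.2 < c} := by
    rw [← hmap, Measure.map_apply hpair hE1]; rfl
  have e2 : P {ω | A (W ω) (X ω)} = (ν.prod μ) {p : (J → ℝ) × ℝ | A p.1 p.2} := by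
    rw [← hmap, Measure.map_apply hpair hAmeas]; rfl
  rw [e1, e2, Measure.prod_apply hE1, Measure.prod_apply hAmeas]
  calc ∫⁻ w, μ (Prod.mk w ⁻¹' {p : (J → ℝ) × ℝ | A p.1 p.2 ∧ p.2 < c}) ∂ν
      ≤ ∫⁻ w, ENNReal.ofReal (F c) * μ (Prod.mk w ⁻¹' {p : (J → ℝ) × ℝ | A p.1 p.2}) ∂ν := by
        apply lintegral_mono
        intro w
        dsimp only
        have h1 : Prod.mk w ⁻¹' {p : (J → ℝ) × ℝ | A p.1 p.2 ∧ p.2 < c}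
            = {z | A w z} ∩ Set.Iio c := rfl
        have h2 : Prod.mk w ⁻¹' {p : (J → ℝ) × ℝ | A p.1 p.2} = {z | A w z} := rfl
        rw [h1, h2]
        exact slice_bound μ F hFc hmono hIic hF0 hF1 {z | A w z}
          (fun x y hx hxy => hAmono w x y hxy hx) c
    _ = ENNReal.ofReal (F c) * ∫⁻ w, μ (Prod.mk w ⁻¹' {p : (J → ℝ) × ℝ | A p.1 p.2}) ∂ν := by
        rw [lintegral_const_mul _ (measurable_measure_prodMk_left hAmeas)]

lemma pair_diag_zero (P : Measure Ω) [IsProbabilityMeasure P]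
    (X Y : Ω → ℝ) (hX : Measurable X) (hY : Measurable Y) (hind : IndepFun X Y P)
    (hatom : ∀ x, P.map Y {x} = 0) (c : ℝ) :
    P {ω | X ω + c = Y ω} = 0 := by
  have hmap : P.map (fun ω => (X ω, Y ω)) = (P.map X).prod (P.map Y) :=
    (indepFun_iff_map_prod_eq_prod_map_map hX.aemeasurable hY.aemeasurable).mp hind
  haveI : IsProbabilityMeasure (P.map Y) := Measure.isProbabilityMeasure_map hY.aemeasurable
  have hE : MeasurableSet {p : ℝ × ℝ | p.1 + c = p.2} :=
    measurableSet_eq_fun (by fun_prop) (by fun_prop)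
  have : P {ω | X ω + c = Y ω} = ((P.map X).prod (P.map Y)) {p : ℝ × ℝ | p.1 + c = p.2} := by
    rw [← hmap, Measure.map_apply (hX.prodMk hY) hE]; rfl
  rw [this, Measure.prod_apply hE]
  have h0 : ∀ x : ℝ, (P.map Y) (Prod.mk x ⁻¹' {p : ℝ × ℝ | p.1 + c = p.2}) = 0 := by
    intro x
    have : Prod.mk x ⁻¹' {p : ℝ × ℝ | p.1 + c = p.2} = {x + c} := by
      ext z; simp [eq_comm]
    rw [this]; exact hatom _
  rw [lintegral_congr h0]
  simp

end keylem
theorem stmt9 {Ω : Type*} [MeasurableSpace Ω] (P : Measure Ω) [IsProbabilityMeasure P]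
    (m k : ℕ) (hk : 1 ≤ k) (hkm : k ≤ m)
    (Z : Fin m → Ω → ℝ) (hZmeas : ∀ i, Measurable (Z i))
    (hindep : iIndepFun Z P)
    (F : ℝ → ℝ) (hFc : Continuous F) (hFm : StrictMono F)
    (hcdf : ∀ i x, (P {ω | Z i ω ≤ x}).toReal = F x)
    (θ : Fin m → ℝ) (α δ : ℝ) (hα : α ∈ Set.Ioo (0:ℝ) 1) (hδ : δ ∈ Set.Ioo (0:ℝ) 1)
    (cl cu : ℝ) (hcl : F cl = 1 - δ * α / m) (hcu : F (-cu) = (1 - δ) * α / k)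
    (S : Ω → Finset (Fin m))
    (hScard : ∀ ω, (S ω).card = k)
    (hSsel : ∀ ω, ∀ i ∈ S ω, ∀ j ∉ S ω, θ j + Z j ω ≤ θ i + Z i ω) :
    P {ω | ∀ i ∈ S ω, θ i ∈ Set.Icc (θ i + Z i ω - cl) (θ i + Z i ω + cu)}
      ≥ ENNReal.ofReal (1 - α) := by
  classical
  have hm : 0 < m := lt_of_lt_of_le hk hkm
  have hk0 : 0 < k := hk
  set i0 : Fin m := ⟨0, hm⟩
  have hF0 : ∀ x, 0 ≤ F x := fun x => (hcdf i0 x) ▸ ENNReal.toReal_nonneg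
  have hF1 : ∀ x, F x ≤ 1 := by
    intro x
    rw [← hcdf i0 x]
    have := prob_le_one (μ := P) (s := {ω | Z i0 ω ≤ x})
    calc (P {ω | Z i0 ω ≤ x}).toReal ≤ (1 : ℝ≥0∞).toReal :=
          ENNReal.toReal_mono (by simp) this
      _ = 1 := by simp
  haveI hPmapinst : ∀ i : Fin m, IsProbabilityMeasure (P.map (Z i)) :=
    fun i => Measure.isProbabilityMeasure_map (hZmeas i).aemeasurable
  have hIic : ∀ (i : Fin m) (x : ℝ), P.map (Z i) (Set.Iic x) = ENNReal.ofReal (F x) := by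
    intro i x
    rw [Measure.map_apply (hZmeas i) measurableSet_Iic]
    have hpre : Z i ⁻¹' Set.Iic x = {ω | Z i ω ≤ x} := rfl
    rw [hpre, ← hcdf i x, ENNReal.ofReal_toReal (measure_ne_top P _)]
  have hatom : ∀ (i : Fin m) (x : ℝ), P.map (Z i) {x} = 0 :=
    fun i x => atom_zero _ F hFc (hIic i) x
  set Y : Fin m → Ω → ℝ := fun i ω => θ i + Z i ω with hYdef
  have hYmeas : ∀ i, Measurable (Y i) := fun i => measurable_const.add (hZmeas i)
  set rnk : Fin m → Ω → ℕ :=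
    fun i ω => (Finset.univ.filter fun j => Y i ω < Y j ω).card with hrnk
  have hrnkmeas : ∀ i, Measurable (rnk i) := by
    intro i
    have he : rnk i = fun ω => ∑ j : Fin m, if Y i ω < Y j ω then 1 else 0 := by
      funext ω; exact Finset.card_filter _ _
    rw [he]
    exact Finset.measurable_sum _ fun j _ =>
      Measurable.ite (measurableSet_lt (hYmeas i) (hYmeas j)) measurable_const measurable_const
  set C : Fin m → Set Ω := fun i => {ω | rnk i ω < k} with hCdef
  have hCmeas : ∀ i, MeasurableSet (C i) := by
    intro i
    have : C i = rnk i ⁻¹' (Set.Iio k) := rfl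
    rw [this]
    exact (hrnkmeas i) measurableSet_Iio
  set D : Set Ω := (⋃ i, {ω | cl < Z i ω}) ∪ ⋃ i, (C i ∩ {ω | Z i ω < -cu}) with hDdef
  have hDmeas : MeasurableSet D :=
    (MeasurableSet.iUnion fun i => measurableSet_lt measurable_const (hZmeas i)).union
      (MeasurableSet.iUnion fun i =>
        (hCmeas i).inter (measurableSet_lt (hZmeas i) measurable_const))
  have hsub : Dᶜ ⊆ {ω | ∀ i ∈ S ω, θ i ∈ Set.Icc (θ i + Z i ω - cl) (θ i + Z i ω + cu)} := by
    intro ω hω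
    simp only [hDdef, Set.compl_union, Set.mem_inter_iff, Set.compl_iUnion, Set.mem_iInter,
      Set.mem_compl_iff, Set.mem_setOf_eq, Set.mem_inter_iff, not_and, not_lt] at hω
    obtain ⟨h1, h2⟩ := hω
    intro i hi
    have hcl' : Z i ω ≤ cl := h1 i
    have hrank : rnk i ω < k := by
      have hsubs : (Finset.univ.filter fun j => Y i ω < Y j ω) ⊆ (S ω).erase i := by
        intro j hj
        simp only [Finset.mem_filter, Finset.mem_univ, true_and] at hj
        have hjS : j ∈ S ω := by
          by_contra hjn
          have := hSsel ω i hi j hjn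
          simp only [hYdef] at hj
          linarith
        have hji : j ≠ i := by rintro rfl; exact lt_irrefl _ hj
        exact Finset.mem_erase.mpr ⟨hji, hjS⟩
      calc rnk i ω ≤ ((S ω).erase i).card := Finset.card_le_card hsubs
        _ = k - 1 := by rw [Finset.card_erase_of_mem hi, hScard]
        _ < k := Nat.sub_lt hk0 one_pos
    have hcu' : -cu ≤ Z i ω := h2 i hrank
    simp only [Set.mem_Icc]
    constructor <;> linarith
  have hup : ∀ i, P {ω | cl < Z i ω} = ENNReal.ofReal (δ * α / m) := by
    intro i
    have hset : {ω | cl < Z i ω} = {ω | Z i ω ≤ cl}ᶜ := by ext ω; simp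
    have hmeas' : MeasurableSet {ω | Z i ω ≤ cl} := measurableSet_le (hZmeas i) measurable_const
    have hval : P {ω | Z i ω ≤ cl} = ENNReal.ofReal (F cl) := by
      rw [← hcdf i cl, ENNReal.ofReal_toReal (measure_ne_top P _)]
    rw [hset, prob_compl_eq_one_sub hmeas', hval, ← ENNReal.ofReal_one,
      ← ENNReal.ofReal_sub _ (hF0 cl), hcl]
    congr 1
    ring
  have hlow : ∀ i, P (C i ∩ {ω | Z i ω < -cu}) ≤ ENNReal.ofReal (F (-cu)) * P (C i) := by
    intro i
    set W : Ω → {j : Fin m // j ≠ i} → ℝ := fun ω j => Z j.1 ω with hWdef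
    have hWmeas : Measurable W := measurable_pi_lambda _ fun j => hZmeas j.1
    have hind : IndepFun W (Z i) P := by
      have h1 := hindep.indepFun_finset (Finset.univ.erase i) {i} (by simp) hZmeas
      have h2 := h1.comp (φ := fun v : (↥(Finset.univ.erase i) → ℝ) =>
          (fun j : {j : Fin m // j ≠ i} => v ⟨j.1, Finset.mem_erase.mpr ⟨j.2, Finset.mem_univ _⟩⟩))
        (ψ := fun v : (↥({i} : Finset (Fin m)) → ℝ) => v ⟨i, Finset.mem_singleton_self i⟩)
        (measurable_pi_lambda _ fun j => measurable_pi_apply _)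
          (measurable_pi_apply _ : Measurable fun v : (↥({i} : Finset (Fin m)) → ℝ) => v ⟨i, Finset.mem_singleton_self i⟩)
      exact h2
    set A : ({j : Fin m // j ≠ i} → ℝ) → ℝ → Prop := fun w z =>
      (Finset.univ.filter fun j : {j : Fin m // j ≠ i} => θ i + z < θ j.1 + w j).card < k
      with hAdef
    have hAmeas : MeasurableSet {p : ({j : Fin m // j ≠ i} → ℝ) × ℝ | A p.1 p.2} := by
      have hcardmeas : Measurable (fun p : ({j : Fin m // j ≠ i} → ℝ) × ℝ =>
          (Finset.univ.filter fun j : {j : Fin m // j ≠ i} => θ i + p.2 < θ j.1 + p.1 j).card) := by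
        have he : (fun p : ({j : Fin m // j ≠ i} → ℝ) × ℝ =>
            (Finset.univ.filter fun j : {j : Fin m // j ≠ i} => θ i + p.2 < θ j.1 + p.1 j).card)
            = fun p => ∑ j : {j : Fin m // j ≠ i}, if θ i + p.2 < θ j.1 + p.1 j then 1 else 0 := by
          funext p; exact Finset.card_filter _ _
        rw [he]
        refine Finset.measurable_sum _ fun j _ => Measurable.ite ?_ measurable_const
          measurable_const
        exact measurableSet_lt (measurable_const.add measurable_snd)
          (measurable_const.add ((measurable_pi_apply j).comp measurable_fst))
      exact hcardmeas measurableSet_Iio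
    have hAmono : ∀ w z z', z ≤ z' → A w z → A w z' := by
      intro w z z' hzz' hAz
      refine lt_of_le_of_lt (Finset.card_le_card ?_) hAz
      intro j hj
      simp only [Finset.mem_filter, Finset.mem_univ, true_and] at hj ⊢
      linarith
    have hCeq : ∀ ω, ω ∈ C i ↔ A (W ω) (Z i ω) := by
      intro ω
      have hc' : (Finset.univ.filter fun j : {j : Fin m // j ≠ i} => Y i ω < Y j.1 ω).card
          = rnk i ω := card_filter_subtype i (fun j => Y i ω < Y j ω) (lt_irrefl _)
      constructor
      · intro h
        have h' : rnk i ω < k := h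
        show (Finset.univ.filter fun j : {j : Fin m // j ≠ i} => Y i ω < Y j.1 ω).card < k
        omega
      · intro h
        have h' : (Finset.univ.filter fun j : {j : Fin m // j ≠ i} => Y i ω < Y j.1 ω).card < k
          := h
        show rnk i ω < k
        omega
    have hbnd := key_bound P (Z i) (hZmeas i) W hWmeas hind F hFc hFm.monotone (hIic i)
      hF0 hF1 A hAmeas hAmono (-cu)
    have e1 : C i ∩ {ω | Z i ω < -cu} = {ω | A (W ω) (Z i ω) ∧ Z i ω < -cu} := by
      ext ω; simp only [Set.mem_inter_iff, Set.mem_setOf_eq, hCeq ω]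
    have e2 : C i = {ω | A (W ω) (Z i ω)} := by
      ext ω; simp only [Set.mem_setOf_eq, hCeq ω]
    rw [e1]
    rw [e2]
    exact hbnd
  have hae : ∀ᵐ ω ∂P, Function.Injective (fun i => Y i ω) := by
    rw [ae_iff]
    refine measure_mono_null (t := ⋃ (i) (j) (_ : i ≠ j),
      {ω | Z i ω + (θ i - θ j) = Z j ω}) ?_ ?_
    · intro ω hω
      simp only [Set.mem_setOf_eq, Function.Injective, not_forall] at hω
      obtain ⟨a, b, hab, hne⟩ := hω
      simp only [Set.mem_iUnion]
      refine ⟨a, b, hne, ?_⟩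
      simp only [hYdef] at hab
      simp only [Set.mem_setOf_eq]
      linarith
    · refine measure_iUnion_null fun i => measure_iUnion_null fun j =>
        measure_iUnion_null fun hij => ?_
      exact pair_diag_zero P (Z i) (Z j) (hZmeas i) (hZmeas j) (hindep.indepFun hij)
        (hatom j) _
  have hsumC : ∑ i, P (C i) ≤ (k : ℝ≥0∞) := by
    have e : ∑ i, P (C i) = ∫⁻ ω, (∑ i, (C i).indicator (1 : Ω → ℝ≥0∞) ω) ∂P := by
      rw [lintegral_finset_sum _ (fun i _ => measurable_one.indicator (hCmeas i))]
      exact Finset.sum_congr rfl fun i _ => (lintegral_indicator_one (hCmeas i)).symm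
    rw [e]
    calc ∫⁻ ω, (∑ i, (C i).indicator (1 : Ω → ℝ≥0∞) ω) ∂P
        ≤ ∫⁻ _, (k : ℝ≥0∞) ∂P := by
          apply lintegral_mono_ae
          filter_upwards [hae] with ω hω
          have hcount : ∑ i, (C i).indicator (1 : Ω → ℝ≥0∞) ω
              = ((Finset.univ.filter fun i => ω ∈ C i).card : ℝ≥0∞) := by
            rw [Finset.card_filter]
            push_cast
            refine Finset.sum_congr rfl fun i _ => ?_
            by_cases h : ω ∈ C i <;> simp [h, Set.indicator]
          rw [hcount]
          have hle := rank_card_le (fun i => Y i ω) hω k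
          have hsame : (Finset.univ.filter fun i => ω ∈ C i).card
              = (Finset.univ.filter fun i =>
                (Finset.univ.filter fun j => Y i ω < Y j ω).card < k).card := by
            congr 1
          exact_mod_cast hsame ▸ hle
      _ = (k : ℝ≥0∞) := by rw [lintegral_const]; simp
  have hDbound : P D ≤ ENNReal.ofReal α := by
    have hm' : (m : ℝ) ≠ 0 := Nat.cast_ne_zero.mpr hm.ne'
    have hk' : (k : ℝ) ≠ 0 := Nat.cast_ne_zero.mpr hk0.ne'
    calc P D ≤ (∑ i, P {ω | cl < Z i ω}) + ∑ i, P (C i ∩ {ω | Z i ω < -cu}) :=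
        (measure_union_le _ _).trans
          (add_le_add (measure_iUnion_fintype_le _ _) (measure_iUnion_fintype_le _ _))
      _ ≤ ENNReal.ofReal (δ * α) + ENNReal.ofReal ((1 - δ) * α) := by
          refine add_le_add ?_ ?_
          · rw [Finset.sum_congr rfl fun i _ => hup i, Finset.sum_const, Finset.card_univ,
              Fintype.card_fin, nsmul_eq_mul, ← ENNReal.ofReal_natCast m,
              ← ENNReal.ofReal_mul (Nat.cast_nonneg m)]
            apply ENNReal.ofReal_le_ofReal
            rw [mul_div_assoc']
            rw [mul_comm]
            rw [mul_div_assoc]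
            rw [div_self hm', mul_one]
          · calc ∑ i, P (C i ∩ {ω | Z i ω < -cu})
                ≤ ∑ i, ENNReal.ofReal (F (-cu)) * P (C i) := Finset.sum_le_sum fun i _ => hlow i
              _ = ENNReal.ofReal (F (-cu)) * ∑ i, P (C i) := by rw [Finset.mul_sum]
              _ ≤ ENNReal.ofReal (F (-cu)) * (k : ℝ≥0∞) := by gcongr
              _ = ENNReal.ofReal ((1 - δ) * α) := by
                  rw [hcu, ← ENNReal.ofReal_natCast k,
                    ← ENNReal.ofReal_mul (div_nonneg (by nlinarith [hδ.2.le, hα.1.le]) (Nat.cast_nonneg k))]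
                  congr 1
                  field_simp
      _ = ENNReal.ofReal α := by
          rw [← ENNReal.ofReal_add (by nlinarith [hδ.1.le, hα.1.le]) (by nlinarith [hδ.2.le, hα.1.le])]
          congr 1
          ring
  calc ENNReal.ofReal (1 - α) = 1 - ENNReal.ofReal α := by
        rw [← ENNReal.ofReal_one, ← ENNReal.ofReal_sub _ hα.1.le]
    _ ≤ 1 - P D := tsub_le_tsub_left hDbound 1
    _ = P Dᶜ := (prob_compl_eq_one_sub hDmeas).symm
    _ ≤ P {ω | ∀ i ∈ S ω, θ i ∈ Set.Icc (θ i + Z i ω - cl) (θ i + Z i ω + cu)} :=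
        measure_mono hsub
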